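/- For any integer d ≥ 3 and the choice ℓ = 2 with ℓ₁ = ℓ₃ = 1, ℓ₂ = 2, the real coefficients η₁ = 19/27 + 151/(27√2391), α₁ = 3(121 + √2391)/490, η₂ = −(196/27)·2^{d−3}, α₂ = 9/7, η₃ = 19/27 − 151/(27√2391), α₃ = 3(121 − √2391)/490 satisfy: η₁ + η₂/2^d + η₃ = 1/2; η₁α₁/2 + η₂α₂/(2^{d−1}·6) + η₃α₃/2 = 1/6; η₁α₁²/6 + η₂α₂²/(2^{d−1}·24) + η₃α₃²/6 = 1/24; η₁α₁²/4 + η₂α₂²/(2^{d−2}·36) + η₃α₃²/4 = 1/12. -/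

import Mathlib

theorem three_term_splitting_coeffs_ell_two (d : ℕ) (hd : 3 ≤ d) :
    let η₁ : ℝ := 19/27 + 151 / (27 * Real.sqrt 2391)
    let α₁ : ℝ := 3 * (121 + Real.sqrt 2391) / 490
    let η₂ : ℝ := -(196/27) * 2 ^ (d - 3)
    let α₂ : ℝ := 9/7
    let η₃ : ℝ := 19/27 - 151 / (27 * Real.sqrt 2391)
    let α₃ : ℝ := 3 * (121 - Real.sqrt 2391) / 490
    η₁ + η₂ / 2 ^ d + η₃ = 1/2 ∧
    η₁ * α₁ / 2 + η₂ * α₂ / (2 ^ (d - 1) * 6) + η₃ * α₃ / 2 = 1/6 ∧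
    η₁ * α₁ ^ 2 / 6 + η₂ * α₂ ^ 2 / (2 ^ (d - 1) * 24) + η₃ * α₃ ^ 2 / 6 = 1/24 ∧
    η₁ * α₁ ^ 2 / 4 + η₂ * α₂ ^ 2 / (2 ^ (d - 2) * 36) + η₃ * α₃ ^ 2 / 4 = 1/12 := by
  obtain ⟨k, rfl⟩ : ∃ k, d = 3 + k := ⟨d - 3, by omega⟩
  intro η₁ α₁ η₂ α₂ η₃ α₃
  have h3 : 3 + k - 3 = k := by omega
  have h1 : 3 + k - 1 = 2 + k := by omega
  have h2 : 3 + k - 2 = 1 + k := by omega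
  simp only [η₁, α₁, η₂, α₂, η₃, α₃, h3, h1, h2, pow_add]
  obtain ⟨s, hss, hs0⟩ : ∃ s : ℝ, Real.sqrt 2391 = s ∧ s > 0 :=
    ⟨_, rfl, Real.sqrt_pos.mpr (by norm_num)⟩
  have hs : s^2 = 2391 := hss ▸ Real.sq_sqrt (by norm_num)
  obtain ⟨p, hpp, hp⟩ : ∃ p : ℝ, (2:ℝ)^k = p ∧ p > 0 := ⟨_, rfl, by positivity⟩
  rw [hss, hpp]
  norm_num
  refine ⟨?_, ?_, ?_, ?_⟩ 
  · field_simp; ring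
  · field_simp; ring
  · field_simp; linear_combination (1608768 * s) * hs
  · field_simp; linear_combination (14478912 * s) * hs
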